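/- Let F ⊆ A^+_ℤ be a set of connected (interval-supported) patterns over ℤ and β > 0 with |A| − Σ_{f∈F} β^{1−|f|} ≥ β. Then for all integers i ≤ j and s ∈ {i−1, j+1}, the number of locally admissible patterns satisfies |L_F^({i,…,j} ∪ {s})| ≥ β·|L_F^({i,…,j})|. -/

import Mathlib

set_option linter.unusedSectionVars false


/-- A pattern over `ℤ`: a finite support together with a labeling by letters of `A`. -/
structure ZPattern (A : Type*) where
  supp : Finset ℤ
  val : ℤ → A

/-- A pattern over `ℤ` is connected if its support is an interval. -/
def ZPattern.Connected {A : Type*} (f : ZPattern A) : Prop :=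
  ∃ a b : ℤ, a ≤ b ∧ f.supp = Finset.Icc a b

/-- Locally admissible patterns of support `S`: no translate of a forbidden pattern
occurs inside `S`. -/
def zLocallyAdmissible {A : Type*} (F : Set (ZPattern A)) (S : Finset ℤ) :
    Set ({x // x ∈ S} → A) :=
  {q | ∀ f ∈ F, ∀ g : ℤ,
    ¬ ∃ h : ∀ s ∈ f.supp, g + s ∈ S, ∀ s, ∀ hs : s ∈ f.supp, q ⟨g + s, h s hs⟩ = f.val s}

section Aux
variable {A : Type*} [Fintype A] {F : Set (ZPattern A)}

lemma zLA_restrict {S S' : Finset ℤ} (hSS : S ⊆ S') {q : {x // x ∈ S'} → A}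
    (hq : q ∈ zLocallyAdmissible F S') :
    (fun x : {x // x ∈ S} => q ⟨x.1, hSS x.2⟩) ∈ zLocallyAdmissible F S := by
  intro f hf g hex
  obtain ⟨h, hmatch⟩ := hex
  exact hq f hf g ⟨fun t ht => hSS (h t ht), fun t ht => hmatch t ht⟩

lemma zLA_finite (S : Finset ℤ) : (zLocallyAdmissible F S).Finite := Set.toFinite _

lemma ncard_univ_prod {γ : Type*} (t : Set γ) :
    ((Set.univ : Set A) ×ˢ t).ncard = Fintype.card A * t.ncard := by
  rw [← Nat.card_coe_set_eq, Nat.card_congr (Equiv.Set.prod _ _), Nat.card_prod,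
    Nat.card_congr (Equiv.Set.univ A), Nat.card_eq_fintype_card, Nat.card_coe_set_eq]

/-- extension of a labeling by one point -/
def extFun (S : Finset ℤ) (s0 : ℤ) (a : A) (q : {x // x ∈ S} → A) :
    {x // x ∈ insert s0 S} → A :=
  fun x => if h : (x : ℤ) ∈ S then q ⟨x, h⟩ else a

lemma extFun_mem {S : Finset ℤ} {s0 : ℤ} (a : A) (q : {x // x ∈ S} → A)
    {x : ℤ} (hx : x ∈ S) (hx' : x ∈ insert s0 S) :
    extFun S s0 a q ⟨x, hx'⟩ = q ⟨x, hx⟩ := dif_pos hx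

lemma extFun_not_mem {S : Finset ℤ} {s0 : ℤ} (a : A) (q : {x // x ∈ S} → A)
    {x : ℤ} (hx : x ∉ S) (hx' : x ∈ insert s0 S) :
    extFun S s0 a q ⟨x, hx'⟩ = a := dif_neg hx

/-- the set of pairs (letter, admissible labeling) whose extension is killed -/
def badAll (F : Set (ZPattern A)) (S : Finset ℤ) (s0 : ℤ) : Set (A × ({x // x ∈ S} → A)) :=
  {p | p.2 ∈ zLocallyAdmissible F S ∧
    extFun S s0 p.1 p.2 ∉ zLocallyAdmissible F (insert s0 S)}

/-- pairs killed by a specific forbidden pattern -/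
def badSet (F : Set (ZPattern A)) (S : Finset ℤ) (s0 : ℤ) (f : ZPattern A) :
    Set (A × ({x // x ∈ S} → A)) :=
  {p | p.2 ∈ zLocallyAdmissible F S ∧ ∃ g : ℤ, ∃ h : ∀ t ∈ f.supp, g + t ∈ insert s0 S,
      ∀ t, ∀ ht : t ∈ f.supp, extFun S s0 p.1 p.2 ⟨g + t, h t ht⟩ = f.val t}

lemma step_count (F : Set (ZPattern A)) (S : Finset ℤ) (s0 : ℤ) (hs0 : s0 ∉ S) :
    (Fintype.card A) * (zLocallyAdmissible F S).ncard ≤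
      (badAll F S s0).ncard + (zLocallyAdmissible F (insert s0 S)).ncard := by
  classical
  set LS := zLocallyAdmissible F S
  set LS' := zLocallyAdmissible F (insert s0 S)
  set Good : Set (A × ({x // x ∈ S} → A)) := {p | p.2 ∈ LS ∧ extFun S s0 p.1 p.2 ∈ LS'}
  have hsub : (Set.univ : Set A) ×ˢ LS ⊆ badAll F S s0 ∪ Good := by
    rintro ⟨a, q⟩ ⟨-, hq⟩
    by_cases h : extFun S s0 a q ∈ LS'
    · exact Or.inr ⟨hq, h⟩
    · exact Or.inl ⟨hq, h⟩
  have hGood : Good.ncard ≤ LS'.ncard := by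
    refine Set.ncard_le_ncard_of_injOn (fun p => extFun S s0 p.1 p.2)
      (fun p hp => hp.2) ?_ (zLA_finite _)
    rintro ⟨a, q⟩ _ ⟨a', q'⟩ _ heq
    have h1 : a = a' := by
      have := congrFun heq ⟨s0, Finset.mem_insert_self _ _⟩
      simp only at this
      rwa [extFun_not_mem a q hs0, extFun_not_mem a' q' hs0] at this
    have h2 : q = q' := by
      funext x
      have := congrFun heq ⟨x.1, Finset.mem_insert_of_mem x.2⟩
      simp only at this
      rwa [extFun_mem a q x.2, extFun_mem a' q' x.2] at this
    simp [h1, h2]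
  calc (Fintype.card A) * LS.ncard = ((Set.univ : Set A) ×ˢ LS).ncard :=
        (ncard_univ_prod LS).symm
    _ ≤ (badAll F S s0 ∪ Good).ncard := Set.ncard_le_ncard hsub (Set.toFinite _)
    _ ≤ (badAll F S s0).ncard + Good.ncard := Set.ncard_union_le _ _
    _ ≤ _ := by omega

lemma bad_subset (F : Set (ZPattern A)) (S : Finset ℤ) (s0 : ℤ) (T : Finset F)
    (hT : ∀ f : F, f.1.supp.card ≤ (insert s0 S).card → f ∈ T) :
    badAll F S s0 ⊆ ⋃ f ∈ T, badSet F S s0 f.1 := by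
  rintro ⟨a, q⟩ ⟨hq, hqbad⟩
  simp only [zLocallyAdmissible, Set.mem_setOf_eq, not_forall] at hqbad
  obtain ⟨f, hf, g, hex⟩ := hqbad
  obtain ⟨h, hmatch⟩ := not_not.mp hex
  have hcard : f.supp.card ≤ (insert s0 S).card := by
    refine Finset.card_le_card_of_injOn (fun t => g + t) h ?_
    intro x _ y _ hxy
    simpa using hxy
  refine Set.mem_biUnion (hT ⟨f, hf⟩ hcard) ⟨hq, g, h, hmatch⟩


lemma bad_det_right {i j : ℤ} {f : ZPattern A} (hfF : f ∈ F)
    {a b : ℤ} (hab : a ≤ b) (hsupp : f.supp = Finset.Icc a b)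
    {p : A × ({x // x ∈ Finset.Icc i j} → A)}
    (hp : p ∈ badSet F (Finset.Icc i j) (j + 1) f) :
    p.1 = f.val b ∧ ∀ t (ht : t ∈ Finset.Icc i j), j + 1 - (b - a) ≤ t →
      p.2 ⟨t, ht⟩ = f.val (t - (j + 1 - b)) := by
  obtain ⟨hpLS, g, h, hmatch⟩ := hp
  have hb : b ∈ f.supp := by rw [hsupp]; exact Finset.mem_Icc.mpr ⟨hab, le_refl b⟩
  have hgbS' := h b hb
  have hgb : g + b = j + 1 := by
    by_contra hne
    have hgble : g + b ≤ j := by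
      rcases Finset.mem_insert.mp hgbS' with h1 | h1
      · exact absurd h1 hne
      · exact (Finset.mem_Icc.mp h1).2
    have hinS : ∀ t (ht : t ∈ f.supp), g + t ∈ Finset.Icc i j := by
      intro t ht
      rcases Finset.mem_insert.mp (h t ht) with h1 | h1
      · exfalso
        have htb : t ≤ b := (Finset.mem_Icc.mp (hsupp ▸ ht)).2
        omega
      · exact h1
    exact hpLS f hfF g ⟨hinS, fun t ht =>
      (extFun_mem p.1 p.2 (hinS t ht) (h t ht)).symm.trans (hmatch t ht)⟩
  have hnotS : j + 1 ∉ Finset.Icc i j := by simp [Finset.mem_Icc]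
  constructor
  · have hnot : g + b ∉ Finset.Icc i j := by rw [hgb]; exact hnotS
    exact (extFun_not_mem p.1 p.2 hnot (h b hb)).symm.trans (hmatch b hb)
  · intro t ht htlo
    have htS := Finset.mem_Icc.mp ht
    have hu : t - g ∈ f.supp := by
      rw [hsupp]; exact Finset.mem_Icc.mpr ⟨by omega, by omega⟩
    have hm := hmatch (t - g) hu
    have hpt : (⟨g + (t - g), h _ hu⟩ : {x // x ∈ insert (j + 1) (Finset.Icc i j)}) =
        ⟨t, Finset.mem_insert_of_mem ht⟩ := Subtype.ext (by ring)
    rw [hpt, extFun_mem p.1 p.2 ht] at hm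
    rw [hm]
    congr 1
    omega

lemma bad_card_right {i j : ℤ} {f : ZPattern A} (hfF : f ∈ F)
    {a b : ℤ} (hab : a ≤ b) (hsupp : f.supp = Finset.Icc a b) :
    (badSet F (Finset.Icc i j) (j + 1) f).ncard ≤
      (zLocallyAdmissible F (Finset.Icc i (j - (b - a)))).ncard := by
  have hsub : Finset.Icc i (j - (b - a)) ⊆ Finset.Icc i j :=
    Finset.Icc_subset_Icc_right (by omega)
  refine Set.ncard_le_ncard_of_injOn
    (fun p => fun x => p.2 ⟨x.1, hsub x.2⟩) (fun p hp => zLA_restrict hsub hp.1) ?_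
    (zLA_finite _)
  intro p hp p' hp' heq
  obtain ⟨h1, h2⟩ := bad_det_right hfF hab hsupp hp
  obtain ⟨h1', h2'⟩ := bad_det_right hfF hab hsupp hp'
  have hsnd : p.2 = p'.2 := by
    funext x
    rcases le_or_gt x.1 (j - (b - a)) with hx | hx
    · have hxK : x.1 ∈ Finset.Icc i (j - (b - a)) :=
        Finset.mem_Icc.mpr ⟨(Finset.mem_Icc.mp x.2).1, hx⟩
      have := congrFun heq ⟨x.1, hxK⟩
      simp only at this
      exact this
    · rw [h2 x.1 x.2 (by omega), h2' x.1 x.2 (by omega)]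
  exact Prod.ext (h1.trans h1'.symm) hsnd

lemma bad_det_left {i j : ℤ} {f : ZPattern A} (hfF : f ∈ F)
    {a b : ℤ} (hab : a ≤ b) (hsupp : f.supp = Finset.Icc a b)
    {p : A × ({x // x ∈ Finset.Icc i j} → A)}
    (hp : p ∈ badSet F (Finset.Icc i j) (i - 1) f) :
    p.1 = f.val a ∧ ∀ t (ht : t ∈ Finset.Icc i j), t ≤ i - 1 + (b - a) →
      p.2 ⟨t, ht⟩ = f.val (t - (i - 1 - a)) := by
  obtain ⟨hpLS, g, h, hmatch⟩ := hp
  have ha : a ∈ f.supp := by rw [hsupp]; exact Finset.mem_Icc.mpr ⟨le_refl a, hab⟩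
  have hgaS' := h a ha
  have hga : g + a = i - 1 := by
    by_contra hne
    have hgage : i ≤ g + a := by
      rcases Finset.mem_insert.mp hgaS' with h1 | h1
      · exact absurd h1 hne
      · exact (Finset.mem_Icc.mp h1).1
    have hinS : ∀ t (ht : t ∈ f.supp), g + t ∈ Finset.Icc i j := by
      intro t ht
      rcases Finset.mem_insert.mp (h t ht) with h1 | h1
      · exfalso
        have hta : a ≤ t := (Finset.mem_Icc.mp (hsupp ▸ ht)).1
        omega
      · exact h1
    exact hpLS f hfF g ⟨hinS, fun t ht =>
      (extFun_mem p.1 p.2 (hinS t ht) (h t ht)).symm.trans (hmatch t ht)⟩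
  have hnotS : i - 1 ∉ Finset.Icc i j := by simp [Finset.mem_Icc]
  constructor
  · have hnot : g + a ∉ Finset.Icc i j := by rw [hga]; exact hnotS
    exact (extFun_not_mem p.1 p.2 hnot (h a ha)).symm.trans (hmatch a ha)
  · intro t ht htlo
    have htS := Finset.mem_Icc.mp ht
    have hu : t - g ∈ f.supp := by
      rw [hsupp]; exact Finset.mem_Icc.mpr ⟨by omega, by omega⟩
    have hm := hmatch (t - g) hu
    have hpt : (⟨g + (t - g), h _ hu⟩ : {x // x ∈ insert (i - 1) (Finset.Icc i j)}) =
        ⟨t, Finset.mem_insert_of_mem ht⟩ := Subtype.ext (by ring)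
    rw [hpt, extFun_mem p.1 p.2 ht] at hm
    rw [hm]
    congr 1
    omega

lemma bad_card_left {i j : ℤ} {f : ZPattern A} (hfF : f ∈ F)
    {a b : ℤ} (hab : a ≤ b) (hsupp : f.supp = Finset.Icc a b) :
    (badSet F (Finset.Icc i j) (i - 1) f).ncard ≤
      (zLocallyAdmissible F (Finset.Icc (i + (b - a)) j)).ncard := by
  have hsub : Finset.Icc (i + (b - a)) j ⊆ Finset.Icc i j :=
    Finset.Icc_subset_Icc_left (by omega)
  refine Set.ncard_le_ncard_of_injOn
    (fun p => fun x => p.2 ⟨x.1, hsub x.2⟩) (fun p hp => zLA_restrict hsub hp.1) ?_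
    (zLA_finite _)
  intro p hp p' hp' heq
  obtain ⟨h1, h2⟩ := bad_det_left hfF hab hsupp hp
  obtain ⟨h1', h2'⟩ := bad_det_left hfF hab hsupp hp'
  have hsnd : p.2 = p'.2 := by
    funext x
    rcases le_or_gt x.1 (i - 1 + (b - a)) with hx | hx
    · rw [h2 x.1 x.2 (by omega), h2' x.1 x.2 (by omega)]
    · have hxK : x.1 ∈ Finset.Icc (i + (b - a)) j :=
        Finset.mem_Icc.mpr ⟨by omega, (Finset.mem_Icc.mp x.2).2⟩
      have := congrFun heq ⟨x.1, hxK⟩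
      simp only at this
      exact this
  exact Prod.ext (h1.trans h1'.symm) hsnd


lemma ncard_biUnion_le {ι γ : Type*} [Finite γ] (T : Finset ι) (f : ι → Set γ) :
    (⋃ i ∈ T, f i).ncard ≤ ∑ i ∈ T, (f i).ncard := by
  classical
  induction T using Finset.induction with
  | empty => simp
  | insert x T hx ih =>
    rw [Finset.set_biUnion_insert, Finset.sum_insert hx]
    exact (Set.ncard_union_le _ _).trans (by omega)

lemma finite_small_card (hconn : ∀ f ∈ F, f.Connected) {β : ℝ} (hβ : 0 < β)
    (hsum : Summable fun f : F => β ^ (1 - (f.1.supp.card : ℤ))) (N : ℕ) :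
    {f : F | f.1.supp.card ≤ N}.Finite := by
  set ε : ℝ := min 1 (β ^ (1 - (N : ℤ))) with hε
  have hεpos : 0 < ε := lt_min one_pos (zpow_pos hβ _)
  have hfin : {f : F | ¬ β ^ (1 - (f.1.supp.card : ℤ)) < ε}.Finite := by
    have := hsum.tendsto_cofinite_zero.eventually (gt_mem_nhds hεpos)
    exact Filter.eventually_cofinite.mp this
  refine hfin.subset ?_
  intro f hf
  simp only [Set.mem_setOf_eq, not_lt]
  obtain ⟨a, b, hab, hsupp⟩ := hconn f.1 f.2
  have hc1 : 1 ≤ f.1.supp.card := by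
    rw [hsupp]
    exact Finset.card_pos.mpr ⟨a, Finset.mem_Icc.mpr ⟨le_refl a, hab⟩⟩
  have hcN : f.1.supp.card ≤ N := hf
  rcases le_total 1 β with h1β | hβ1
  · refine (min_le_right _ _).trans (zpow_le_zpow_right₀ h1β ?_)
    have : (f.1.supp.card : ℤ) ≤ (N : ℤ) := by exact_mod_cast hcN
    omega
  · refine (min_le_left _ _).trans ?_
    have hnp : (1 : ℤ) - (f.1.supp.card : ℤ) ≤ 0 := by
      have : (1 : ℤ) ≤ (f.1.supp.card : ℤ) := by exact_mod_cast hc1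
      omega
    calc (1:ℝ) = β ^ (0 : ℤ) := (zpow_zero β).symm
      _ ≤ β ^ (1 - (f.1.supp.card : ℤ)) := by
        apply zpow_le_zpow_right_of_le_one₀ hβ hβ1 hnp


lemma zLA_step (hconn : ∀ f ∈ F, f.Connected) {β : ℝ} (hβ : 0 < β)
    (hsum : Summable fun f : F => β ^ (1 - (f.1.supp.card : ℤ)))
    (hcond : (Fintype.card A : ℝ) - ∑' f : F, β ^ (1 - (f.1.supp.card : ℤ)) ≥ β) :
    ∀ n : ℕ, ∀ i j : ℤ, j + 1 - i = n → ∀ s : ℤ, s = i - 1 ∨ s = j + 1 →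
      β * ((zLocallyAdmissible F (Finset.Icc i j)).ncard : ℝ)
        ≤ ((zLocallyAdmissible F (insert s (Finset.Icc i j))).ncard : ℝ) := by
  classical
  intro n
  induction n using Nat.strong_induction_on with
  | _ n IH =>
  intro i j hn s hs
  have chainR : ∀ k : ℕ, k ≤ n →
      β ^ k * ((zLocallyAdmissible F (Finset.Icc i (j - (k : ℤ)))).ncard : ℝ)
        ≤ ((zLocallyAdmissible F (Finset.Icc i j)).ncard : ℝ) := by
    intro k
    induction k with
    | zero =>
      intro _
      rw [show Finset.Icc i (j - ((0 : ℕ) : ℤ)) = Finset.Icc i j from by norm_num]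
      norm_num
    | succ k ihk =>
      intro hk
      have hk' := ihk (Nat.le_of_succ_le hk)
      have hstep := IH (n - (k + 1)) (by omega) i (j - (k : ℤ) - 1) (by omega)
        (j - (k : ℤ) - 1 + 1) (Or.inr rfl)
      have hins : insert (j - (k : ℤ) - 1 + 1) (Finset.Icc i (j - (k : ℤ) - 1)) =
          Finset.Icc i (j - (k : ℤ)) := by
        ext x
        simp only [Finset.mem_insert, Finset.mem_Icc]
        omega
      rw [hins] at hstep
      have hcast : j - ((k + 1 : ℕ) : ℤ) = j - (k : ℤ) - 1 := by push_cast; ring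
      rw [hcast]
      calc β ^ (k + 1) *
            ((zLocallyAdmissible F (Finset.Icc i (j - (k : ℤ) - 1))).ncard : ℝ)
          = β ^ k * (β *
            ((zLocallyAdmissible F (Finset.Icc i (j - (k : ℤ) - 1))).ncard : ℝ)) := by ring
        _ ≤ β ^ k * ((zLocallyAdmissible F (Finset.Icc i (j - (k : ℤ)))).ncard : ℝ) :=
            mul_le_mul_of_nonneg_left hstep (pow_nonneg hβ.le k)
        _ ≤ _ := hk'
  have chainL : ∀ k : ℕ, k ≤ n →
      β ^ k * ((zLocallyAdmissible F (Finset.Icc (i + (k : ℤ)) j)).ncard : ℝ)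
        ≤ ((zLocallyAdmissible F (Finset.Icc i j)).ncard : ℝ) := by
    intro k
    induction k with
    | zero =>
      intro _
      rw [show Finset.Icc (i + ((0 : ℕ) : ℤ)) j = Finset.Icc i j from by norm_num]
      norm_num
    | succ k ihk =>
      intro hk
      have hk' := ihk (Nat.le_of_succ_le hk)
      have hstep := IH (n - (k + 1)) (by omega) (i + (k : ℤ) + 1) j (by omega)
        (i + (k : ℤ) + 1 - 1) (Or.inl rfl)
      have hins : insert (i + (k : ℤ) + 1 - 1) (Finset.Icc (i + (k : ℤ) + 1) j) =
          Finset.Icc (i + (k : ℤ)) j := by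
        ext x
        simp only [Finset.mem_insert, Finset.mem_Icc]
        omega
      rw [hins] at hstep
      have hcast : i + ((k + 1 : ℕ) : ℤ) = i + (k : ℤ) + 1 := by push_cast; ring
      rw [hcast]
      calc β ^ (k + 1) *
            ((zLocallyAdmissible F (Finset.Icc (i + (k : ℤ) + 1) j)).ncard : ℝ)
          = β ^ k * (β *
            ((zLocallyAdmissible F (Finset.Icc (i + (k : ℤ) + 1) j)).ncard : ℝ)) := by ring
        _ ≤ β ^ k * ((zLocallyAdmissible F (Finset.Icc (i + (k : ℤ)) j)).ncard : ℝ) :=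
            mul_le_mul_of_nonneg_left hstep (pow_nonneg hβ.le k)
        _ ≤ _ := hk'
  have hTfin := finite_small_card hconn hβ hsum (n + 1)
  set T : Finset F := hTfin.toFinset with hTdef
  have htsum_nonneg : ∀ f : F, (0 : ℝ) ≤ β ^ (1 - (f.1.supp.card : ℤ)) :=
    fun f => zpow_nonneg hβ.le _
  have hsumT : ∑ f ∈ T, β ^ (1 - (f.1.supp.card : ℤ)) ≤
      ∑' f : F, β ^ (1 - (f.1.supp.card : ℤ)) :=
    Summable.sum_le_tsum T (fun f _ => htsum_nonneg f) hsum
  have hLnn : (0 : ℝ) ≤ ((zLocallyAdmissible F (Finset.Icc i j)).ncard : ℝ) :=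
    Nat.cast_nonneg _
  rcases hs with hs | hs <;> subst hs
  · -- left case : s = i - 1
    have hs0 : (i - 1 : ℤ) ∉ Finset.Icc i j := by simp [Finset.mem_Icc]
    have hcardS' : (insert (i - 1) (Finset.Icc i j)).card = n + 1 := by
      rw [Finset.card_insert_of_notMem hs0, Int.card_Icc]
      omega
    have hT : ∀ f : F, f.1.supp.card ≤ (insert (i - 1) (Finset.Icc i j)).card → f ∈ T := by
      intro f hf
      rw [hcardS'] at hf
      exact hTfin.mem_toFinset.mpr hf
    have hbad1 : (badAll F (Finset.Icc i j) (i - 1)).ncard ≤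
        ∑ f ∈ T, (badSet F (Finset.Icc i j) (i - 1) f.1).ncard :=
      le_trans (Set.ncard_le_ncard (bad_subset F (Finset.Icc i j) (i - 1) T hT)
        (Set.toFinite _)) (ncard_biUnion_le T _)
    have hperf : ∀ f ∈ T, ((badSet F (Finset.Icc i j) (i - 1) f.1).ncard : ℝ)
        ≤ β ^ (1 - (f.1.supp.card : ℤ)) *
          ((zLocallyAdmissible F (Finset.Icc i j)).ncard : ℝ) := by
      intro f hfT
      obtain ⟨a, b, hab, hsupp⟩ := hconn f.1 f.2
      have hcard : f.1.supp.card = (b + 1 - a).toNat := by rw [hsupp, Int.card_Icc]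
      have hcardT : f.1.supp.card ≤ n + 1 := hTfin.mem_toFinset.mp hfT
      set k : ℕ := (b - a).toNat with hkdef
      have hkc : (k : ℤ) = b - a := Int.toNat_of_nonneg (by omega)
      have hkn : k ≤ n := by omega
      have hchain := chainL k hkn
      rw [hkc] at hchain
      have hb := bad_card_left (i := i) (j := j) f.2 hab hsupp
      have hzpow : β ^ (1 - (f.1.supp.card : ℤ)) = (β ^ k)⁻¹ := by
        have hexp : (1 - (f.1.supp.card : ℤ)) = -(k : ℤ) := by omega
        rw [hexp, zpow_neg, zpow_natCast]
      rw [hzpow, le_inv_mul_iff₀ (pow_pos hβ k)]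
      calc β ^ k * ((badSet F (Finset.Icc i j) (i - 1) f.1).ncard : ℝ)
          ≤ β ^ k * ((zLocallyAdmissible F (Finset.Icc (i + (b - a)) j)).ncard : ℝ) :=
            mul_le_mul_of_nonneg_left (by exact_mod_cast hb) (pow_nonneg hβ.le k)
        _ ≤ _ := hchain
    have hbadR : ((badAll F (Finset.Icc i j) (i - 1)).ncard : ℝ)
        ≤ (∑' f : F, β ^ (1 - (f.1.supp.card : ℤ))) *
          ((zLocallyAdmissible F (Finset.Icc i j)).ncard : ℝ) := by
      calc ((badAll F (Finset.Icc i j) (i - 1)).ncard : ℝ)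
          ≤ ((∑ f ∈ T, (badSet F (Finset.Icc i j) (i - 1) f.1).ncard : ℕ) : ℝ) := by
            exact_mod_cast hbad1
        _ = ∑ f ∈ T, ((badSet F (Finset.Icc i j) (i - 1) f.1).ncard : ℝ) := by push_cast; rfl
        _ ≤ ∑ f ∈ T, β ^ (1 - (f.1.supp.card : ℤ)) *
            ((zLocallyAdmissible F (Finset.Icc i j)).ncard : ℝ) := Finset.sum_le_sum hperf
        _ = (∑ f ∈ T, β ^ (1 - (f.1.supp.card : ℤ))) *
            ((zLocallyAdmissible F (Finset.Icc i j)).ncard : ℝ) := by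
            rw [Finset.sum_mul]
        _ ≤ _ := mul_le_mul_of_nonneg_right hsumT hLnn
    have hstepR : (Fintype.card A : ℝ) *
        ((zLocallyAdmissible F (Finset.Icc i j)).ncard : ℝ) ≤
        ((badAll F (Finset.Icc i j) (i - 1)).ncard : ℝ) +
        ((zLocallyAdmissible F (insert (i - 1) (Finset.Icc i j))).ncard : ℝ) := by
      exact_mod_cast step_count F (Finset.Icc i j) (i - 1) hs0
    have hfin : β * ((zLocallyAdmissible F (Finset.Icc i j)).ncard : ℝ) ≤
        ((Fintype.card A : ℝ) - ∑' f : F, β ^ (1 - (f.1.supp.card : ℤ))) *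
          ((zLocallyAdmissible F (Finset.Icc i j)).ncard : ℝ) :=
      mul_le_mul_of_nonneg_right hcond hLnn
    have hexpand : ((Fintype.card A : ℝ) - ∑' f : F, β ^ (1 - (f.1.supp.card : ℤ))) *
          ((zLocallyAdmissible F (Finset.Icc i j)).ncard : ℝ)
        = (Fintype.card A : ℝ) * ((zLocallyAdmissible F (Finset.Icc i j)).ncard : ℝ)
          - (∑' f : F, β ^ (1 - (f.1.supp.card : ℤ))) *
            ((zLocallyAdmissible F (Finset.Icc i j)).ncard : ℝ) := by ring
    linarith
  · -- right case : s = j + 1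
    have hs0 : (j + 1 : ℤ) ∉ Finset.Icc i j := by simp [Finset.mem_Icc]
    have hcardS' : (insert (j + 1) (Finset.Icc i j)).card = n + 1 := by
      rw [Finset.card_insert_of_notMem hs0, Int.card_Icc]
      omega
    have hT : ∀ f : F, f.1.supp.card ≤ (insert (j + 1) (Finset.Icc i j)).card → f ∈ T := by
      intro f hf
      rw [hcardS'] at hf
      exact hTfin.mem_toFinset.mpr hf
    have hbad1 : (badAll F (Finset.Icc i j) (j + 1)).ncard ≤
        ∑ f ∈ T, (badSet F (Finset.Icc i j) (j + 1) f.1).ncard :=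
      le_trans (Set.ncard_le_ncard (bad_subset F (Finset.Icc i j) (j + 1) T hT)
        (Set.toFinite _)) (ncard_biUnion_le T _)
    have hperf : ∀ f ∈ T, ((badSet F (Finset.Icc i j) (j + 1) f.1).ncard : ℝ)
        ≤ β ^ (1 - (f.1.supp.card : ℤ)) *
          ((zLocallyAdmissible F (Finset.Icc i j)).ncard : ℝ) := by
      intro f hfT
      obtain ⟨a, b, hab, hsupp⟩ := hconn f.1 f.2
      have hcard : f.1.supp.card = (b + 1 - a).toNat := by rw [hsupp, Int.card_Icc]
      have hcardT : f.1.supp.card ≤ n + 1 := hTfin.mem_toFinset.mp hfT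
      set k : ℕ := (b - a).toNat with hkdef
      have hkc : (k : ℤ) = b - a := Int.toNat_of_nonneg (by omega)
      have hkn : k ≤ n := by omega
      have hchain := chainR k hkn
      rw [hkc] at hchain
      have hb := bad_card_right (i := i) (j := j) f.2 hab hsupp
      have hzpow : β ^ (1 - (f.1.supp.card : ℤ)) = (β ^ k)⁻¹ := by
        have hexp : (1 - (f.1.supp.card : ℤ)) = -(k : ℤ) := by omega
        rw [hexp, zpow_neg, zpow_natCast]
      rw [hzpow, le_inv_mul_iff₀ (pow_pos hβ k)]
      calc β ^ k * ((badSet F (Finset.Icc i j) (j + 1) f.1).ncard : ℝ)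
          ≤ β ^ k * ((zLocallyAdmissible F (Finset.Icc i (j - (b - a)))).ncard : ℝ) :=
            mul_le_mul_of_nonneg_left (by exact_mod_cast hb) (pow_nonneg hβ.le k)
        _ ≤ _ := hchain
    have hbadR : ((badAll F (Finset.Icc i j) (j + 1)).ncard : ℝ)
        ≤ (∑' f : F, β ^ (1 - (f.1.supp.card : ℤ))) *
          ((zLocallyAdmissible F (Finset.Icc i j)).ncard : ℝ) := by
      calc ((badAll F (Finset.Icc i j) (j + 1)).ncard : ℝ)
          ≤ ((∑ f ∈ T, (badSet F (Finset.Icc i j) (j + 1) f.1).ncard : ℕ) : ℝ) := by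
            exact_mod_cast hbad1
        _ = ∑ f ∈ T, ((badSet F (Finset.Icc i j) (j + 1) f.1).ncard : ℝ) := by push_cast; rfl
        _ ≤ ∑ f ∈ T, β ^ (1 - (f.1.supp.card : ℤ)) *
            ((zLocallyAdmissible F (Finset.Icc i j)).ncard : ℝ) := Finset.sum_le_sum hperf
        _ = (∑ f ∈ T, β ^ (1 - (f.1.supp.card : ℤ))) *
            ((zLocallyAdmissible F (Finset.Icc i j)).ncard : ℝ) := by
            rw [Finset.sum_mul]
        _ ≤ _ := mul_le_mul_of_nonneg_right hsumT hLnn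
    have hstepR : (Fintype.card A : ℝ) *
        ((zLocallyAdmissible F (Finset.Icc i j)).ncard : ℝ) ≤
        ((badAll F (Finset.Icc i j) (j + 1)).ncard : ℝ) +
        ((zLocallyAdmissible F (insert (j + 1) (Finset.Icc i j))).ncard : ℝ) := by
      exact_mod_cast step_count F (Finset.Icc i j) (j + 1) hs0
    have hfin : β * ((zLocallyAdmissible F (Finset.Icc i j)).ncard : ℝ) ≤
        ((Fintype.card A : ℝ) - ∑' f : F, β ^ (1 - (f.1.supp.card : ℤ))) *
          ((zLocallyAdmissible F (Finset.Icc i j)).ncard : ℝ) :=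
      mul_le_mul_of_nonneg_right hcond hLnn
    have hexpand : ((Fintype.card A : ℝ) - ∑' f : F, β ^ (1 - (f.1.supp.card : ℤ))) *
          ((zLocallyAdmissible F (Finset.Icc i j)).ncard : ℝ)
        = (Fintype.card A : ℝ) * ((zLocallyAdmissible F (Finset.Icc i j)).ncard : ℝ)
          - (∑' f : F, β ^ (1 - (f.1.supp.card : ℤ))) *
            ((zLocallyAdmissible F (Finset.Icc i j)).ncard : ℝ) := by ring
    linarith

end Aux

/-- Extension lemma over `ℤ` for connected forbidden patterns: if
`|A| - ∑_{f∈F} β^{1-|f|} ≥ β`, then extending the interval `{i,…,j}` by one endpoint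
multiplies the number of locally admissible patterns by at least `β`. -/
theorem zLocallyAdmissible_extension {A : Type*} [Fintype A]
    (F : Set (ZPattern A)) (hconn : ∀ f ∈ F, f.Connected)
    (β : ℝ) (hβ : 0 < β)
    (hsum : Summable fun f : F => β ^ (1 - (f.1.supp.card : ℤ)))
    (hcond : (Fintype.card A : ℝ) - ∑' f : F, β ^ (1 - (f.1.supp.card : ℤ)) ≥ β)
    (i j : ℤ) (hij : i ≤ j) (s : ℤ) (hs : s = i - 1 ∨ s = j + 1) :
    β * ((zLocallyAdmissible F (Finset.Icc i j)).ncard : ℝ)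
      ≤ ((zLocallyAdmissible F (insert s (Finset.Icc i j))).ncard : ℝ) :=
  zLA_step hconn hβ hsum hcond (j + 1 - i).toNat i j (by omega) s hs
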